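/- Let A and B be two independent sets of the same size in a finite simple graph G with A ≠ B. If the Piran graph Π(A,B) is even-hole-free, then there exists a vertex v ∈ B \ A that has at most one neighbor in A \ B. -/

import Mathlib

open Finset

section Aux

variable {W : Type*}


/-- A cyclic sequence of length `n ≥ 3` in `H` with vertices in `s`. -/
def CycSeqOn (H : SimpleGraph W) (s : Set W) (n : ℕ) (f : ℕ → W) : Prop :=
  3 ≤ n ∧ (∀ i < n, f i ∈ s) ∧ Set.InjOn f (Set.Iio n) ∧
  (∀ i, i + 1 < n → H.Adj (f i) (f (i + 1))) ∧ H.Adj (f (n - 1)) (f 0)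

def HasCycOn (H : SimpleGraph W) (s : Set W) : Prop := ∃ n f, CycSeqOn H s n f

/-- A path sequence: `m+1` distinct vertices in `s`, consecutive ones adjacent. -/
def PathSeqOn (H : SimpleGraph W) (s : Set W) (m : ℕ) (f : ℕ → W) : Prop :=
  (∀ i ≤ m, f i ∈ s) ∧ Set.InjOn f (Set.Iic m) ∧
  (∀ i, i < m → H.Adj (f i) (f (i + 1)))

lemma leaf_of_no_cyc [DecidableEq W] (H : SimpleGraph W) [DecidableRel H.Adj]
    (s : Finset W) (hs : s.Nonempty) (hnc : ¬ HasCycOn H (↑s : Set W)) :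
    ∃ v ∈ s, (s.filter (H.Adj v ·)).card ≤ 1 := by
  classical
  set S : Set ℕ := {m | ∃ f, PathSeqOn H (↑s) m f} with hS
  obtain ⟨v₀, hv₀⟩ := hs
  have h0 : 0 ∈ S := ⟨fun _ => v₀, fun i _ => hv₀, fun a ha b hb _ => by
      simp only [Set.mem_Iic, Nat.le_zero] at ha hb; omega, fun i hi => by omega⟩
  have hbdd : BddAbove S := by
    refine ⟨s.card, fun m hm => ?_⟩
    obtain ⟨f, hmem, hinj, _⟩ := hm
    have := Finset.card_le_card_of_injOn f (fun a ha => hmem a (by simpa using ha))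
      (fun a ha b hb hab => hinj (by simpa using ha) (by simpa using hb) hab)
      (t := s) (s := Finset.Iic m)
    rw [Nat.card_Iic] at this
    omega
  set m := sSup S with hm
  obtain ⟨f, hmem, hinj, hadj⟩ : ∃ f, PathSeqOn H (↑s) m f := Nat.sSup_mem ⟨0, h0⟩ hbdd
  have hmax : ∀ m' ∈ S, m' ≤ m := fun m' hm' => le_csSup hbdd hm'
  refine ⟨f m, hmem m le_rfl, ?_⟩
  have hsub : s.filter (H.Adj (f m) ·) ⊆ {f (m - 1)} := by
    intro u hu
    rw [Finset.mem_filter] at hu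
    obtain ⟨hus, hadju⟩ := hu
    by_cases hur : ∃ i ≤ m, f i = u
    · obtain ⟨i, him, hfi⟩ := hur
      have hine : i ≠ m := by rintro rfl; rw [hfi] at hadju; exact H.irrefl hadju
      rcases eq_or_lt_of_le (Nat.le_sub_one_of_lt (lt_of_le_of_ne him hine)) with he | hlt
      · simp [← hfi, he]
      · -- chord: cyclic sequence f (i + ·) of length m - i + 1
        exfalso
        apply hnc
        refine ⟨m - i + 1, fun k => f (i + k), ?_, ?_, ?_, ?_, ?_⟩
        · omega
        · intro k hk; exact hmem _ (by omega)
        · intro a ha b hb hab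
          simp only [Set.mem_Iio] at ha hb
          have := hinj (show i + a ∈ Set.Iic m by simp; omega)
            (show i + b ∈ Set.Iic m by simp; omega) hab
          omega
        · intro k hk
          show H.Adj (f (i + k)) (f (i + (k + 1)))
          have h2 : i + (k + 1) = i + k + 1 := by ring
          rw [h2]
          exact hadj _ (by omega)
        · show H.Adj (f (i + (m - i + 1 - 1))) (f (i + 0))
          have h1 : i + (m - i + 1 - 1) = m := by omega
          rw [h1, show i + 0 = i from rfl, hfi]
          exact hadju
    · -- extend the path
      exfalso
      push_neg at hur
      have hne : m + 1 ∈ S := by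
        refine ⟨fun k => if k ≤ m then f k else u, ?_, ?_, ?_⟩
        · intro i hi
          by_cases h : i ≤ m <;> simp only [h, if_true, if_false]
          · exact hmem i h
          · exact hus
        · intro a ha b hb hab
          simp only [Set.mem_Iic] at ha hb
          by_cases h1 : a ≤ m <;> by_cases h2 : b ≤ m <;> simp [h1, h2] at hab
          · exact hinj (by simpa using h1) (by simpa using h2) hab
          · exact absurd hab (hur a h1)
          · exact absurd hab.symm (hur b h2)
          · omega
        · intro i hi
          by_cases h : i < m
          · simpa [Nat.le_of_lt h, Nat.succ_le_of_lt h, show i + 1 ≤ m from h] using hadj i h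
          · have : i = m := by omega
            subst this
            simpa [show ¬ (m + 1 ≤ m) by omega] using hadju
      have := hmax _ hne
      omega
  calc (s.filter (H.Adj (f m) ·)).card ≤ ({f (m-1)} : Finset W).card := Finset.card_le_card hsub
    _ = 1 := Finset.card_singleton _

lemma HasCycOn.mono {H : SimpleGraph W} {s t : Set W} (hst : s ⊆ t) :
    HasCycOn H s → HasCycOn H t := by
  rintro ⟨n, f, h1, h2, h3, h4, h5⟩
  exact ⟨n, f, h1, fun i hi => hst (h2 i hi), h3, h4, h5⟩

lemma degsum_of_no_cyc [DecidableEq W] (H : SimpleGraph W) [DecidableRel H.Adj]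
    (s : Finset W) (hnc : ¬ HasCycOn H (↑s : Set W)) (hs : s.Nonempty) :
    ∑ v ∈ s, (s.filter (H.Adj v ·)).card ≤ 2 * (s.card - 1) := by
  classical
  induction s using Finset.strongInduction with
  | _ s IH =>
  obtain ⟨v, hv, hdeg⟩ := leaf_of_no_cyc H s hs hnc
  set s' := s.erase v with hs'
  have hss : s = insert v s' := by simp [hs', Finset.insert_erase hv]
  by_cases hsing : s' = ∅
  · have : s = {v} := by rw [hss, hsing]; rfl
    subst this
    simp only [Finset.sum_singleton, Finset.card_singleton]
    rw [Finset.filter_singleton, if_neg H.irrefl]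
    simp
  · have hs'ne : s'.Nonempty := Finset.nonempty_iff_ne_empty.2 hsing
    have hsub : s' ⊂ s := Finset.erase_ssubset hv
    have hnc' : ¬ HasCycOn H (↑s' : Set W) := fun h => hnc (h.mono (by exact_mod_cast hsub.subset))
    have IH' := IH s' hsub hnc' hs'ne
    -- split the sum
    have hvs' : v ∉ s' := Finset.notMem_erase v s
    have hsplit : ∑ w ∈ s, (s.filter (H.Adj w ·)).card
        = (s.filter (H.Adj v ·)).card + ∑ w ∈ s', (s.filter (H.Adj w ·)).card := by
      rw [hss, Finset.sum_insert hvs', ← hss]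
    have hterm : ∀ w ∈ s', (s.filter (H.Adj w ·)).card
        = (s'.filter (H.Adj w ·)).card + (if H.Adj w v then 1 else 0) := by
      intro w hw
      rw [hss, Finset.filter_insert]
      by_cases h : H.Adj w v
      · rw [if_pos h, Finset.card_insert_of_notMem (fun hc => hvs' (Finset.mem_of_mem_filter _ hc)), if_pos h]
      · rw [if_neg h, if_neg h, add_zero]
    have hsum2 : ∑ w ∈ s', (if H.Adj w v then 1 else 0) = (s'.filter (fun w => H.Adj w v)).card := by
      rw [Finset.card_filter]
    have hfc : s'.filter (fun w => H.Adj w v) = s'.filter (H.Adj v ·) := by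
      apply Finset.filter_congr
      intro x _
      simp [SimpleGraph.adj_comm]
    have hfv : s.filter (H.Adj v ·) = s'.filter (H.Adj v ·) := by
      rw [hss, Finset.filter_insert, if_neg (H.irrefl)]
    have hcard : 2 ≤ s.card := by
      have : 1 ≤ s'.card := Finset.card_pos.2 hs'ne
      have : s'.card = s.card - 1 := by rw [hs', Finset.card_erase_of_mem hv]
      omega
    have hc' : s'.card = s.card - 1 := by rw [hs', Finset.card_erase_of_mem hv]
    calc ∑ w ∈ s, (s.filter (H.Adj w ·)).card
        = (s.filter (H.Adj v ·)).card + ∑ w ∈ s', ((s'.filter (H.Adj w ·)).card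
            + (if H.Adj w v then 1 else 0)) := by
          rw [hsplit]; congr 1; exact Finset.sum_congr rfl hterm
      _ = (s.filter (H.Adj v ·)).card + (∑ w ∈ s', (s'.filter (H.Adj w ·)).card)
            + (s'.filter (fun w => H.Adj w v)).card := by rw [Finset.sum_add_distrib, hsum2]; ring
      _ ≤ 1 + (2 * (s'.card - 1)) + 1 := by
          have h1 : (s'.filter (fun w => H.Adj w v)).card ≤ 1 := by
            rw [hfc, ← hfv]; exact hdeg
          omega
      _ ≤ 2 * (s.card - 1) := by omega

lemma exists_chordless_cyc {H : SimpleGraph W} {s : Set W} (h : HasCycOn H s) :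
    ∃ n f, CycSeqOn H s n f ∧
      ∀ i j, i < j → j < n → H.Adj (f i) (f j) → j = i + 1 ∨ (i = 0 ∧ j = n - 1) := by
  classical
  set N : Set ℕ := {n | ∃ f, CycSeqOn H s n f} with hN
  have hne : N.Nonempty := by obtain ⟨n, f, hf⟩ := h; exact ⟨n, f, hf⟩
  set n := sInf N with hn
  obtain ⟨f, hf⟩ : ∃ f, CycSeqOn H s n f := Nat.sInf_mem hne
  obtain ⟨h3, hmem, hinj, hadj, hwrap⟩ := hf
  refine ⟨n, f, ⟨h3, hmem, hinj, hadj, hwrap⟩, ?_⟩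
  intro i j hij hjn hadjij
  by_contra hcon
  push_neg at hcon
  obtain ⟨hne1, hne2⟩ := hcon
  set d := j - i with hd
  have hd2 : 2 ≤ d := by omega
  have hdn : d ≤ n - 2 := by
    rcases Nat.eq_zero_or_pos i with h0 | h0
    · subst h0
      have : j ≠ n - 1 := fun hc => hne2 rfl hc
      omega
    · omega
  have hlt : d + 1 < n := by omega
  have : d + 1 ∈ N := by
    refine ⟨fun k => f (i + k), ?_, ?_, ?_, ?_, ?_⟩
    · omega
    · intro k hk; exact hmem _ (by omega)
    · intro a ha b hb hab
      simp only [Set.mem_Iio] at ha hb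
      have := hinj (show i + a ∈ Set.Iio n by simp; omega)
        (show i + b ∈ Set.Iio n by simp; omega) hab
      omega
    · intro k hk
      show H.Adj (f (i + k)) (f (i + (k + 1)))
      have h2 : i + (k + 1) = i + k + 1 := by ring
      rw [h2]
      exact hadj _ (by omega)
    · show H.Adj (f (i + (d + 1 - 1))) (f (i + 0))
      have h1 : i + (d + 1 - 1) = j := by omega
      rw [h1, show i + 0 = i from rfl]
      exact hadjij.symm
  have := Nat.sInf_le this
  omega


lemma modchar (n a b : ℕ) (ha : a < n) (hb : b < n) (h2 : 2 ≤ n) :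
    ((n - b + a) % n = 1) ↔ (a = b + 1 ∨ (b = n - 1 ∧ a = 0)) := by
  rcases le_or_gt b a with h | h
  · have he : n - b + a = n + (a - b) := by omega
    rw [he, Nat.add_mod_left, Nat.mod_eq_of_lt (by omega)]
    omega
  · rw [Nat.mod_eq_of_lt (by omega)]
    omega


end Aux

variable {V : Type*} [DecidableEq V]

/-- `A` is an independent set of the graph `G`. -/
def IsIndep (G : SimpleGraph V) (A : Finset V) : Prop :=
  ∀ u ∈ A, ∀ v ∈ A, ¬G.Adj u v

/-- A graph is even-hole-free if it contains no induced cycle with an even number of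
vertices (a hole has at least 4 vertices). -/
def EvenHoleFree {W : Type*} (H : SimpleGraph W) : Prop :=
  ∀ n : ℕ, 4 ≤ n → n % 2 = 0 → IsEmpty (SimpleGraph.cycleGraph n ↪g H)

/-- The Piran graph `Π(A,B)` of two independent sets `A`, `B` of `G`: the subgraph of `G`
induced by `(A \ B) ∪ (B \ A)`. -/
def Piran (G : SimpleGraph V) (A B : Finset V) :
    SimpleGraph ((↑A \ ↑B ∪ (↑B \ ↑A) : Set V)) :=
  G.induce (↑A \ ↑B ∪ (↑B \ ↑A) : Set V)

theorem aux_cyc {V : Type*} [DecidableEq V] [Fintype V] (G : SimpleGraph V) [DecidableRel G.Adj]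
    (A B : Finset V) (hA : IsIndep G A) (hB : IsIndep G B)
    (hcard : A.card = B.card) (hne : A ≠ B)
    (hdeg : ∀ v ∈ B \ A, 2 ≤ ((A \ B).filter (G.Adj v ·)).card) :
    HasCycOn G (↑((A \ B) ∪ (B \ A)) : Set V) := by
  classical
  set A' := A \ B with hA'
  set B' := B \ A with hB'
  set S := A' ∪ B' with hSdef
  have hcA' : A'.card + (A ∩ B).card = A.card := Finset.card_sdiff_add_card_inter A B
  have hcB' : B'.card + (B ∩ A).card = B.card := Finset.card_sdiff_add_card_inter B A
  have hAB : (A ∩ B).card = (B ∩ A).card := by rw [Finset.inter_comm]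
  have hcards : A'.card = B'.card := by omega
  have hB'ne : B'.Nonempty := by
    rw [Finset.nonempty_iff_ne_empty]
    intro hc
    apply hne
    have hsub : B ⊆ A := by
      intro x hx
      by_contra hxa
      have : x ∈ B' := Finset.mem_sdiff.2 ⟨hx, hxa⟩
      simp [hc] at this
    exact (Finset.eq_of_subset_of_card_le hsub (le_of_eq hcard)).symm
  set k := B'.card with hk
  have hk1 : 1 ≤ k := Finset.card_pos.2 hB'ne
  have hdisj : Disjoint A' B' := by
    rw [Finset.disjoint_left]
    intro x hx1 hx2
    exact (Finset.mem_sdiff.1 hx1).2 (Finset.mem_sdiff.1 hx2).1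
  have hScard : S.card = 2 * k := by
    rw [hSdef, Finset.card_union_of_disjoint hdisj]
    try omega
  by_contra hnc
  have hbound := degsum_of_no_cyc G S hnc ⟨_, Finset.mem_union_right _ hB'ne.choose_spec⟩
  -- lower bound on the sum
  have hBsum : ∀ b ∈ B', 2 ≤ (S.filter (G.Adj b ·)).card := by
    intro b hb
    refine le_trans (hdeg b hb) (Finset.card_le_card ?_)
    intro x hx
    rw [Finset.mem_filter] at hx ⊢
    exact ⟨Finset.mem_union_left _ hx.1, hx.2⟩
  have hdouble : ∑ a ∈ A', (B'.filter (G.Adj a ·)).card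
      = ∑ b ∈ B', (A'.filter (G.Adj b ·)).card := by
    simp only [Finset.card_filter]
    rw [Finset.sum_comm]
    apply Finset.sum_congr rfl
    intro b _
    apply Finset.sum_congr rfl
    intro a _
    simp [SimpleGraph.adj_comm]
  have hAsum : ∀ a ∈ A', (B'.filter (G.Adj a ·)).card ≤ (S.filter (G.Adj a ·)).card := by
    intro a _
    refine Finset.card_le_card ?_
    intro x hx
    rw [Finset.mem_filter] at hx ⊢
    exact ⟨Finset.mem_union_right _ hx.1, hx.2⟩
  have hsplitsum : ∑ v ∈ S, (S.filter (G.Adj v ·)).card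
      = ∑ a ∈ A', (S.filter (G.Adj a ·)).card + ∑ b ∈ B', (S.filter (G.Adj b ·)).card := by
    rw [hSdef, Finset.sum_union hdisj]
  have h1 : 2 * k ≤ ∑ b ∈ B', (S.filter (G.Adj b ·)).card := by
    calc 2 * k = ∑ _b ∈ B', 2 := by rw [Finset.sum_const, smul_eq_mul]; ring
      _ ≤ _ := Finset.sum_le_sum hBsum
  have h2 : 2 * k ≤ ∑ a ∈ A', (S.filter (G.Adj a ·)).card := by
    calc 2 * k = ∑ _b ∈ B', 2 := by rw [Finset.sum_const, smul_eq_mul]; ring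
      _ ≤ ∑ b ∈ B', (A'.filter (G.Adj b ·)).card := Finset.sum_le_sum (fun b hb =>
          le_trans (hdeg b hb) le_rfl)
      _ = ∑ a ∈ A', (B'.filter (G.Adj a ·)).card := hdouble.symm
      _ ≤ _ := Finset.sum_le_sum hAsum
  rw [hsplitsum] at hbound
  rw [hScard] at hbound
  omega


theorem aux_emb {V : Type*} [DecidableEq V] [Fintype V] (G : SimpleGraph V)
    (A B : Finset V) (hA : IsIndep G A) (hB : IsIndep G B)
    (hcyc : HasCycOn G (↑((A \ B) ∪ (B \ A)) : Set V))
    (hehf : EvenHoleFree (Piran G A B)) : False := by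
  classical
  obtain ⟨n, f, ⟨h3, hmem, hinj, hadj, hwrap⟩, hchord⟩ := exists_chordless_cyc hcyc
  set A' := A \ B with hA'
  set B' := B \ A with hB'
  set S := A' ∪ B' with hSdef
  have hmemS : ∀ i, i < n → f i ∈ S := fun i hi => Finset.mem_coe.1 (hmem i hi)
  -- alternation
  have alt : ∀ x y : V, x ∈ S → y ∈ S → G.Adj x y → ((x ∈ A') ↔ ¬(y ∈ A')) := by
    intro x y hx hy hxy
    rw [Finset.mem_union] at hx hy
    have hnAA : ¬(x ∈ A' ∧ y ∈ A') := by
      rintro ⟨h1, h2⟩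
      exact hA x (Finset.mem_sdiff.1 h1).1 y (Finset.mem_sdiff.1 h2).1 hxy
    have hnBB : ¬(x ∈ B' ∧ y ∈ B') := by
      rintro ⟨h1, h2⟩
      exact hB x (Finset.mem_sdiff.1 h1).1 y (Finset.mem_sdiff.1 h2).1 hxy
    tauto
  have hpar : ∀ i, i < n → ((f i ∈ A') ↔ (Even i ↔ f 0 ∈ A')) := by
    intro i
    induction i with
    | zero => intro _; simp
    | succ i IH =>
      intro hi
      have hIH := IH (by omega)
      have halt := alt (f i) (f (i + 1)) (hmemS i (by omega)) (hmemS (i + 1) hi)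
        (hadj i hi)
      rw [Nat.even_add_one]
      tauto
  have heven : n % 2 = 0 := by
    have h1 := hpar (n - 1) (by omega)
    have h2 := alt (f (n - 1)) (f 0) (hmemS _ (by omega)) (hmemS 0 (by omega)) hwrap
    have h3' : Even (n - 1) ↔ ¬ Even n := by
      have : n - 1 + 1 = n := by omega
      rw [← this, Nat.even_add_one]
      tauto
    rw [← Nat.even_iff]
    tauto
  have h4 : 4 ≤ n := by omega
  -- build the embedding
  have hsets : ((↑S : Set V)) = (↑A \ ↑B ∪ (↑B \ ↑A) : Set V) := by
    simp [hSdef, hA', hB', Finset.coe_union, Finset.coe_sdiff]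
  have hmem' : ∀ i, i < n → f i ∈ (↑A \ ↑B ∪ (↑B \ ↑A) : Set V) := by
    intro i hi
    rw [← hsets]
    exact hmem i hi
  have h2n : 2 ≤ n := by omega
  have key : ∀ a b : Fin n, G.Adj (f a.val) (f b.val) ↔ (SimpleGraph.cycleGraph n).Adj a b := by
    intro a b
    rw [SimpleGraph.cycleGraph_adj']
    rw [Fin.sub_def, Fin.sub_def]
    simp only []
    rw [modchar n a.val b.val a.isLt b.isLt h2n, modchar n b.val a.val b.isLt a.isLt h2n]
    constructor
    · intro hadjab
      have hne : a.val ≠ b.val := by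
        intro hc
        rw [hc] at hadjab
        exact G.irrefl hadjab
      rcases lt_or_gt_of_ne hne with h | h
      · rcases hchord a.val b.val h b.isLt hadjab with h' | ⟨h1, h2⟩
        · right; left; omega
        · left; right; omega
      · rcases hchord b.val a.val h a.isLt hadjab.symm with h' | ⟨h1, h2⟩
        · left; left; omega
        · right; right; omega
    · rintro (h | h)
      · rcases h with h | ⟨h1, h2⟩
        · have := hadj b.val (by omega)
          rw [← h] at this
          exact this.symm
        · rw [h1, h2]
          exact hwrap.symm
      · rcases h with h | ⟨h1, h2⟩
        · have := hadj a.val (by omega)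
          rw [← h] at this
          exact this
        · rw [h1, h2]
          exact hwrap
  have emb : SimpleGraph.cycleGraph n ↪g Piran G A B := by
    refine ⟨⟨fun i => ⟨f i.val, hmem' i.val i.isLt⟩, ?_⟩, ?_⟩
    · intro a b hab
      have : f a.val = f b.val := congrArg Subtype.val hab
      have := hinj (Set.mem_Iio.2 a.isLt) (Set.mem_Iio.2 b.isLt) this
      exact Fin.ext this
    · intro a b
      show G.Adj (f a.val) (f b.val) ↔ _
      exact key a b
  exact (hehf n h4 heven).false emb

/-- if `A` and `B` are distinct independent sets of the same size in `G`
and the Piran graph `Π(A,B)` is even-hole-free, then some vertex of `B \ A` has at most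
one neighbor in `A \ B`. -/
theorem stmt14 {V : Type*} [DecidableEq V] [Fintype V] (G : SimpleGraph V)
    (A B : Finset V) (hA : IsIndep G A) (hB : IsIndep G B)
    (hcard : A.card = B.card) (hne : A ≠ B)
    (hehf : EvenHoleFree (Piran G A B)) :
    ∃ v ∈ B \ A, {w : V | w ∈ A \ B ∧ G.Adj v w}.ncard ≤ 1 := by
  classical
  by_contra hcon
  push_neg at hcon
  have hdeg : ∀ v ∈ B \ A, 2 ≤ ((A \ B).filter (G.Adj v ·)).card := by
    intro v hv
    have h1 := hcon v hv
    have h2 : {w : V | w ∈ A \ B ∧ G.Adj v w} = ↑((A \ B).filter (G.Adj v ·)) := by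
      ext w
      simp [Finset.mem_filter]
    rw [h2, Set.ncard_coe_finset] at h1
    omega
  exact aux_emb G A B hA hB (aux_cyc G A B hA hB hcard hne hdeg) hehf
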